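/- For 1 ≤ k and 1 ≤ h, with c_i^{(k)}(q) = (-1)^{k-i} q^{binom(k-i,2)} / ((q;q)_{k-i}(q;q)_{i-1}): ∑_{i=1}^{k} c_i^{(k)}(q) ∏_{j=1}^{h-1} (1 - q^{i+j}) = (q^{k(k-1)}/(q;q)_k) · [h-1 choose k-1]_q · (q;q)_h. -/
import Mathlib


open Finset

/-- q-Pochhammer symbol: (x;q)_m = ∏_{j=0}^{m-1} (1 - x q^j). -/
noncomputable def qPoch {F : Type*} [Field F] (x q : F) (m : ℕ) : F :=
  ∏ j ∈ Finset.range m, (1 - x * q ^ j)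

/-- (q;q)_m = ∏_{j=1}^{m} (1 - q^j). -/
noncomputable def qFac {F : Type*} [Field F] (q : F) (m : ℕ) : F := qPoch q q m

/-- Gaussian binomial coefficient, equal to 0 when a > n. -/
noncomputable def qBinom {F : Type*} [Field F] (q : F) (n a : ℕ) : F :=
  if a ≤ n then qFac q n / (qFac q a * qFac q (n - a)) else 0

/-- c_i^{(k)}(q) = (-1)^{k-i} q^{binom(k-i,2)} / ((q;q)_{k-i} (q;q)_{i-1}). -/
noncomputable def cCoef {F : Type*} [Field F] (q : F) (k i : ℕ) : F :=
  (-1 : F) ^ (k - i) * q ^ ((k - i).choose 2) / (qFac q (k - i) * qFac q (i - 1))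

section Basic

local notation "q" => (RatFunc.X : RatFunc ℚ)

lemma q_pow_ne_one (j : ℕ) (hj : 1 ≤ j) : q ^ j ≠ 1 := by
  intro h
  have : ((Polynomial.X : Polynomial ℚ) ^ j) = 1 := by
    apply IsFractionRing.injective (Polynomial ℚ) (RatFunc ℚ)
    rw [map_pow, map_one]
    simpa [RatFunc.algebraMap_X] using h
  have := congrArg Polynomial.natDegree this
  simp [Polynomial.natDegree_X_pow] at this
  omega

lemma one_sub_q_pow_ne (j : ℕ) : (1 : RatFunc ℚ) - q ^ (j + 1) ≠ 0 := by
  intro h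
  exact q_pow_ne_one (j+1) (by omega) (by linear_combination -h)

lemma qFac_succ (m : ℕ) : qFac q (m + 1) = qFac q m * (1 - q ^ (m + 1)) := by
  simp [qFac, qPoch, Finset.prod_range_succ, pow_succ, mul_comm]

lemma qFac_ne_zero (m : ℕ) : qFac q m ≠ 0 := by
  induction m with
  | zero => simp [qFac, qPoch]
  | succ n ih => rw [qFac_succ]; exact mul_ne_zero ih (one_sub_q_pow_ne n)

lemma qFac_add (s K : ℕ) :
    qFac q (s + K) = qFac q s * ∏ r ∈ range K, (1 - q ^ (s + 1 + r)) := by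
  rw [qFac, qPoch, Finset.prod_range_add]
  rw [qFac, qPoch]
  congr 1
  apply Finset.prod_congr rfl
  intro r _
  rw [← pow_succ']
  ring_nf

lemma choose_two_succ (m : ℕ) : (m + 1).choose 2 = m.choose 2 + m := by
  rw [Nat.choose_succ_succ]
  simp [Nat.choose_one_right, add_comm]

lemma gauss (n : ℕ) (t : RatFunc ℚ) :
    qPoch t q n = qFac q n * ∑ j ∈ range (n + 1),
      (-1 : RatFunc ℚ) ^ j * q ^ (j.choose 2) * t ^ j / (qFac q j * qFac q (n - j)) := by
  induction n with
  | zero => simp [qPoch, qFac]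
  | succ n ih =>
    have hU : (∑ j ∈ range (n + 2), (-1:RatFunc ℚ)^j * q^(j.choose 2) * t^j
          * (1 - q^(n+1-j)) / (qFac q j * qFac q (n+1-j)))
        = ∑ j ∈ range (n+1), (-1:RatFunc ℚ)^j * q^(j.choose 2) * t^j / (qFac q j * qFac q (n-j)) := by
      rw [Finset.sum_range_succ]
      have h0 : (-1:RatFunc ℚ)^(n+1) * q^((n+1).choose 2) * t^(n+1)
          * (1 - q^(n+1-(n+1))) / (qFac q (n+1) * qFac q (n+1-(n+1))) = 0 := by
        simp
      rw [h0, add_zero]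
      refine Finset.sum_congr rfl fun j hj => ?_
      have hj' : j ≤ n := Nat.lt_succ_iff.mp (Finset.mem_range.mp hj)
      have h1 : n + 1 - j = (n - j) + 1 := by omega
      rw [h1, qFac_succ]
      calc (-1:RatFunc ℚ)^j * q^(j.choose 2) * t^j * (1 - q^((n-j)+1))
            / (qFac q j * (qFac q (n-j) * (1 - q^((n-j)+1))))
          = ((-1:RatFunc ℚ)^j * q^(j.choose 2) * t^j) * (1 - q^((n-j)+1))
            / ((qFac q j * qFac q (n-j)) * (1 - q^((n-j)+1))) := by ring
        _ = _ := mul_div_mul_right _ _ (one_sub_q_pow_ne (n-j))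
    have hV : (∑ j ∈ range (n + 2), (-1:RatFunc ℚ)^j * q^(j.choose 2) * t^j
          * (q^(n+1-j) * (1 - q^j)) / (qFac q j * qFac q (n+1-j)))
        = -((q^n * t) * ∑ j ∈ range (n+1),
            (-1:RatFunc ℚ)^j * q^(j.choose 2) * t^j / (qFac q j * qFac q (n-j))) := by
      rw [Finset.sum_range_succ']
      have h0 : (-1:RatFunc ℚ)^0 * q^(Nat.choose 0 2) * t^0
          * (q^(n+1-0) * (1 - q^0)) / (qFac q 0 * qFac q (n+1-0)) = 0 := by
        simp
      rw [h0, add_zero]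
      have hcong : ∀ i ∈ range (n+1), (-1:RatFunc ℚ)^(i+1) * q^((i+1).choose 2) * t^(i+1)
          * (q^(n+1-(i+1)) * (1 - q^(i+1))) / (qFac q (i+1) * qFac q (n+1-(i+1)))
          = -((q^n * t) * ((-1:RatFunc ℚ)^i * q^(i.choose 2) * t^i / (qFac q i * qFac q (n-i)))) := by
        intro i hi
        have hi' : i ≤ n := Nat.lt_succ_iff.mp (Finset.mem_range.mp hi)
        have h1 : n + 1 - (i + 1) = n - i := by omega
        have h2 : q ^ i * q ^ (n - i) = q ^ n := by rw [← pow_add]; congr 1; omega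
        rw [h1, choose_two_succ, qFac_succ]
        calc (-1:RatFunc ℚ)^(i+1) * q^(i.choose 2 + i) * t^(i+1)
              * (q^(n-i) * (1 - q^(i+1))) / (qFac q i * (1 - q^(i+1)) * qFac q (n-i))
            = ((-1:RatFunc ℚ)^(i+1) * q^(i.choose 2 + i) * t^(i+1) * q^(n-i))
              * (1 - q^(i+1)) / ((qFac q i * qFac q (n-i)) * (1 - q^(i+1))) := by ring
          _ = ((-1:RatFunc ℚ)^(i+1) * q^(i.choose 2 + i) * t^(i+1) * q^(n-i))
              / (qFac q i * qFac q (n-i)) := mul_div_mul_right _ _ (one_sub_q_pow_ne i)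
          _ = -((q^n * t) * ((-1:RatFunc ℚ)^i * q^(i.choose 2) * t^i / (qFac q i * qFac q (n-i)))) := by
              rw [← h2, pow_add, pow_succ, pow_succ]
              ring
      rw [Finset.sum_congr rfl hcong, Finset.sum_neg_distrib, ← Finset.mul_sum]
    have key : ∀ j ∈ range (n + 2),
        qFac q (n+1) * ((-1:RatFunc ℚ)^j * q^(j.choose 2) * t^j / (qFac q j * qFac q (n+1-j)))
        = qFac q n * ((-1:RatFunc ℚ)^j * q^(j.choose 2) * t^j * (1 - q^(n+1-j)) / (qFac q j * qFac q (n+1-j)))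
          + qFac q n * ((-1:RatFunc ℚ)^j * q^(j.choose 2) * t^j * (q^(n+1-j) * (1 - q^j)) / (qFac q j * qFac q (n+1-j))) := by
      intro j hj
      have hj' : j ≤ n + 1 := Nat.lt_succ_iff.mp (Finset.mem_range.mp hj)
      have hpow : q ^ (n + 1 - j) * q ^ j = q ^ (n + 1) := by rw [← pow_add]; congr 1; omega
      rw [qFac_succ]
      have h1 : (1 : RatFunc ℚ) - q ^ (n+1) = (1 - q^(n+1-j)) + q^(n+1-j) * (1 - q^j) := by
        linear_combination hpow
      rw [h1]
      ring
    have main : qFac q (n+1) * (∑ j ∈ range (n + 2),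
          (-1:RatFunc ℚ)^j * q^(j.choose 2) * t^j / (qFac q j * qFac q (n+1-j)))
        = qFac q n * (∑ j ∈ range (n+1),
            (-1:RatFunc ℚ)^j * q^(j.choose 2) * t^j / (qFac q j * qFac q (n-j))) * (1 - t * q^n) := by
      rw [Finset.mul_sum, Finset.sum_congr rfl key, Finset.sum_add_distrib,
        ← Finset.mul_sum, ← Finset.mul_sum, hU, hV]
      ring
    calc qPoch t q (n + 1) = qPoch t q n * (1 - t * q ^ n) := by
          rw [qPoch, Finset.prod_range_succ]; rfl
      _ = qFac q n * (∑ j ∈ range (n+1),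
            (-1:RatFunc ℚ)^j * q^(j.choose 2) * t^j / (qFac q j * qFac q (n-j))) * (1 - t * q^n) := by
          rw [ih]
      _ = _ := main.symm

lemma sum_Icc_one {M : Type*} [AddCommMonoid M] (f : ℕ → M) (n : ℕ) :
    ∑ i ∈ Icc 1 n, f i = ∑ i ∈ range n, f (i + 1) := by
  induction n with
  | zero => simp
  | succ n ih => rw [Finset.sum_Icc_succ_top (by omega), ih, Finset.sum_range_succ]

lemma prod_Icc_one {M : Type*} [CommMonoid M] (f : ℕ → M) (n : ℕ) :
    ∏ i ∈ Icc 1 n, f i = ∏ i ∈ range n, f (i + 1) := by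
  induction n with
  | zero => simp
  | succ n ih => rw [Finset.prod_Icc_succ_top (by omega), ih, Finset.prod_range_succ]

lemma two_mul_choose_two (m : ℕ) : 2 * m.choose 2 = m * (m - 1) := by
  induction m with
  | zero => rfl
  | succ p ih =>
    rw [choose_two_succ]
    cases p with
    | zero => rfl
    | succ r =>
      simp only [Nat.succ_sub_one] at ih ⊢
      have e1 : (r + 1) * r + 2 * (r + 1) = (r + 1 + 1) * (r + 1) := by ring
      omega

lemma exp_arith (K s : ℕ) :
    (K + s).choose 2 + 2 * (K + s) + K.choose 2
      = K * (K + 1) + (s.choose 2 + (K + 2) * s) := by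
  induction s with
  | zero =>
    simp only [Nat.add_zero, Nat.mul_zero]
    have h := two_mul_choose_two K
    have hc0 : Nat.choose 0 2 = 0 := rfl
    cases K with
    | zero => rfl
    | succ r =>
      simp only [Nat.succ_sub_one] at h
      have e1 : (r + 1) * r + 2 * (r + 1) = (r + 1) * (r + 1 + 1) := by ring
      omega
  | succ s ih =>
    have h1 : (K + (s + 1)).choose 2 = (K + s).choose 2 + (K + s) := choose_two_succ (K + s)
    have h2 : (s + 1).choose 2 = s.choose 2 + s := choose_two_succ s
    have e : (K + 2) * (s + 1) = (K + 2) * s + (K + 2) := by ring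
    omega

lemma gauss_reflect (K : ℕ) (t : RatFunc ℚ) (ht : t ≠ 0) :
    ∑ i ∈ range (K + 1),
        (-1 : RatFunc ℚ) ^ (K - i) * q ^ ((K - i).choose 2) * t ^ i
          / (qFac q (K - i) * qFac q i)
      = (∏ r ∈ range K, (t - q ^ r)) / qFac q K := by
  rw [← Finset.sum_range_reflect]
  have h1 : ∀ j ∈ range (K + 1),
      (-1 : RatFunc ℚ) ^ (K - (K + 1 - 1 - j)) * q ^ ((K - (K + 1 - 1 - j)).choose 2)
          * t ^ (K + 1 - 1 - j) / (qFac q (K - (K + 1 - 1 - j)) * qFac q (K + 1 - 1 - j))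
      = t ^ K * ((-1 : RatFunc ℚ) ^ j * q ^ (j.choose 2) * (t⁻¹) ^ j
          / (qFac q j * qFac q (K - j))) := by
    intro j hj
    have hj' : j ≤ K := Nat.lt_succ_iff.mp (Finset.mem_range.mp hj)
    have e1 : K + 1 - 1 - j = K - j := by omega
    have e2 : K - (K - j) = j := by omega
    have e3 : t ^ (K - j) = t ^ K * (t⁻¹) ^ j := by
      rw [inv_pow, ← div_eq_mul_inv, eq_div_iff (pow_ne_zero j ht), ← pow_add]
      congr 1
      omega
    rw [e1, e2, e3]
    ring
  rw [Finset.sum_congr rfl h1, ← Finset.mul_sum]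
  have h3 : qPoch t⁻¹ q K / qFac q K
      = ∑ j ∈ range (K + 1), (-1 : RatFunc ℚ) ^ j * q ^ (j.choose 2) * (t⁻¹) ^ j
          / (qFac q j * qFac q (K - j)) := by
    rw [gauss K t⁻¹, mul_div_cancel_left₀ _ (qFac_ne_zero K)]
  rw [← h3]
  have h4 : t ^ K * qPoch t⁻¹ q K = ∏ r ∈ range K, (t - q ^ r) := by
    rw [qPoch]
    have h5 : ∀ r ∈ range K, t - q ^ r = t * (1 - t⁻¹ * q ^ r) := fun r _ => by
      field_simp
    rw [Finset.prod_congr rfl h5, Finset.prod_mul_distrib, Finset.prod_const,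
      Finset.card_range]
  rw [← mul_div_assoc, h4]

lemma prod_pow_sub (K s : ℕ) :
    ∏ r ∈ range K, (q ^ (K + s) - q ^ r)
      = (-1 : RatFunc ℚ) ^ K * q ^ (K.choose 2) * (qFac q (s + K) / qFac q s) := by
  have h1 : ∀ r ∈ range K, q ^ (K + s) - q ^ r = -q ^ r * (1 - q ^ (K + s - r)) := by
    intro r hr
    have hr' : r < K := Finset.mem_range.mp hr
    have hp : q ^ r * q ^ (K + s - r) = q ^ (K + s) := by
      rw [← pow_add]; congr 1; omega
    linear_combination -hp
  rw [Finset.prod_congr rfl h1, Finset.prod_mul_distrib]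
  have h2 : ∏ r ∈ range K, (-q ^ r : RatFunc ℚ) = (-1 : RatFunc ℚ) ^ K * q ^ (K.choose 2) := by
    calc ∏ r ∈ range K, (-q ^ r : RatFunc ℚ)
        = ∏ r ∈ range K, ((-1 : RatFunc ℚ) * q ^ r) := by
          exact Finset.prod_congr rfl fun r _ => by ring
      _ = (-1 : RatFunc ℚ) ^ K * ∏ r ∈ range K, (q ^ r : RatFunc ℚ) := by
          rw [Finset.prod_mul_distrib, Finset.prod_const, Finset.card_range]
      _ = (-1 : RatFunc ℚ) ^ K * q ^ (∑ r ∈ range K, r) := by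
          rw [Finset.prod_pow_eq_pow_sum]
      _ = (-1 : RatFunc ℚ) ^ K * q ^ (K.choose 2) := by
          rw [Finset.sum_range_id, Nat.choose_two_right]
  have h3 : ∏ r ∈ range K, ((1 : RatFunc ℚ) - q ^ (K + s - r))
      = ∏ j ∈ range K, ((1 : RatFunc ℚ) - q ^ (s + 1 + j)) := by
    conv_rhs => rw [← Finset.prod_range_reflect]
    refine Finset.prod_congr rfl fun r hr => ?_
    have hr' : r < K := Finset.mem_range.mp hr
    have e : K + s - r = s + 1 + (K - 1 - r) := by omega
    rw [e]
  have h4 : ∏ j ∈ range K, ((1 : RatFunc ℚ) - q ^ (s + 1 + j)) = qFac q (s + K) / qFac q s := by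
    rw [qFac_add s K, mul_div_cancel_left₀ _ (qFac_ne_zero s)]
  rw [h2, h3, h4]


lemma main_term (K L s : ℕ) :
    qFac q (K + L) * ((-1 : RatFunc ℚ) ^ (K + s) * q ^ ((K + s).choose 2) * (q ^ 2) ^ (K + s)
        / (qFac q (K + s) * qFac q (K + L - (K + s))))
      * ((∏ r ∈ range K, (q ^ (K + s) - q ^ r)) / qFac q K)
    = q ^ (K * (K + 1)) * qFac q (K + L) / qFac q K
      * ((-1 : RatFunc ℚ) ^ s * q ^ (s.choose 2) * (q ^ (K + 2)) ^ s
        / (qFac q s * qFac q (L - s))) := by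
  have h1 : K + L - (K + s) = L - s := by omega
  rw [h1, prod_pow_sub K s, show s + K = K + s from Nat.add_comm s K]
  have hsgn : (-1 : RatFunc ℚ) ^ (K + s) * (-1 : RatFunc ℚ) ^ K = (-1 : RatFunc ℚ) ^ s := by
    calc (-1 : RatFunc ℚ) ^ (K + s) * (-1) ^ K
        = ((-1 : RatFunc ℚ) * (-1)) ^ K * (-1) ^ s := by rw [pow_add, mul_pow]; ring
      _ = (-1 : RatFunc ℚ) ^ s := by norm_num
  have hq : q ^ ((K + s).choose 2) * (q ^ 2) ^ (K + s) * q ^ (K.choose 2)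
      = q ^ (K * (K + 1)) * (q ^ (s.choose 2) * (q ^ (K + 2)) ^ s) := by
    rw [← pow_mul, ← pow_mul, ← pow_add, ← pow_add, ← pow_add, ← pow_add]
    congr 1
    have := exp_arith K s
    omega
  have hcancel : qFac q (K + s) / (qFac q (K + s) * (qFac q (L - s) * qFac q s * qFac q K))
      = (qFac q (L - s) * qFac q s * qFac q K)⁻¹ :=
    div_mul_cancel_left₀ (qFac_ne_zero (K + s)) _
  calc qFac q (K + L) * ((-1 : RatFunc ℚ) ^ (K + s) * q ^ ((K + s).choose 2) * (q ^ 2) ^ (K + s)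
          / (qFac q (K + s) * qFac q (L - s)))
        * ((-1 : RatFunc ℚ) ^ K * q ^ (K.choose 2) * (qFac q (K + s) / qFac q s) / qFac q K)
      = ((-1 : RatFunc ℚ) ^ (K + s) * (-1 : RatFunc ℚ) ^ K)
          * (q ^ ((K + s).choose 2) * (q ^ 2) ^ (K + s) * q ^ (K.choose 2))
          * (qFac q (K + L)
            * (qFac q (K + s) / (qFac q (K + s) * (qFac q (L - s) * qFac q s * qFac q K)))) := by
        ring
    _ = (-1 : RatFunc ℚ) ^ s * (q ^ (K * (K + 1)) * (q ^ (s.choose 2) * (q ^ (K + 2)) ^ s))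
          * (qFac q (K + L) * (qFac q (L - s) * qFac q s * qFac q K)⁻¹) := by
        rw [hsgn, hq, hcancel]
    _ = q ^ (K * (K + 1)) * qFac q (K + L) / qFac q K
          * ((-1 : RatFunc ℚ) ^ s * q ^ (s.choose 2) * (q ^ (K + 2)) ^ s
            / (qFac q s * qFac q (L - s))) := by
        ring

end Basic

/-- For 1 ≤ k, 1 ≤ h:
∑_{i=1}^{k} c_i^{(k)}(q) ∏_{j=1}^{h-1}(1 - q^{i+j})
  = (q^{k(k-1)}/(q;q)_k)·[h-1 choose k-1]_q·(q;q)_h, in ℚ(q). -/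
theorem cCoef_evaluation (k h : ℕ) (hk : 1 ≤ k) (hh : 1 ≤ h) :
    ∑ i ∈ Finset.Icc 1 k,
        cCoef (RatFunc.X : RatFunc ℚ) k i *
          ∏ j ∈ Finset.Icc 1 (h - 1), (1 - (RatFunc.X : RatFunc ℚ) ^ (i + j)) =
      (RatFunc.X : RatFunc ℚ) ^ (k * (k - 1)) / qFac (RatFunc.X : RatFunc ℚ) k *
        qBinom (RatFunc.X : RatFunc ℚ) (h - 1) (k - 1) * qFac (RatFunc.X : RatFunc ℚ) h := by

  obtain ⟨K, rfl⟩ : ∃ K, k = K + 1 := ⟨k - 1, by omega⟩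
  obtain ⟨H, rfl⟩ : ∃ H, h = H + 1 := ⟨h - 1, by omega⟩
  simp only [Nat.add_sub_cancel]
  rw [sum_Icc_one]
  have hterm : ∀ i ∈ range (K + 1),
      cCoef (RatFunc.X : RatFunc ℚ) (K + 1) (i + 1)
          * ∏ j ∈ Icc 1 H, (1 - (RatFunc.X : RatFunc ℚ) ^ (i + 1 + j))
      = ∑ m ∈ range (H + 1),
          (qFac (RatFunc.X : RatFunc ℚ) H * ((-1 : RatFunc ℚ) ^ m
              * (RatFunc.X : RatFunc ℚ) ^ (m.choose 2) * ((RatFunc.X : RatFunc ℚ) ^ 2) ^ m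
            / (qFac (RatFunc.X : RatFunc ℚ) m * qFac (RatFunc.X : RatFunc ℚ) (H - m))))
          * ((-1 : RatFunc ℚ) ^ (K - i) * (RatFunc.X : RatFunc ℚ) ^ ((K - i).choose 2)
              * ((RatFunc.X : RatFunc ℚ) ^ m) ^ i
            / (qFac (RatFunc.X : RatFunc ℚ) (K - i) * qFac (RatFunc.X : RatFunc ℚ) i)) := by
    intro i _
    have hc : cCoef (RatFunc.X : RatFunc ℚ) (K + 1) (i + 1)
        = (-1 : RatFunc ℚ) ^ (K - i) * (RatFunc.X : RatFunc ℚ) ^ ((K - i).choose 2)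
            / (qFac (RatFunc.X : RatFunc ℚ) (K - i) * qFac (RatFunc.X : RatFunc ℚ) i) := by
      simp [cCoef, Nat.succ_sub_succ_eq_sub, Nat.add_sub_cancel]
    have hP : (∏ j ∈ Icc 1 H, (1 - (RatFunc.X : RatFunc ℚ) ^ (i + 1 + j)))
        = qPoch ((RatFunc.X : RatFunc ℚ) ^ (i + 2)) (RatFunc.X : RatFunc ℚ) H := by
      rw [prod_Icc_one, qPoch]
      refine Finset.prod_congr rfl fun j _ => ?_
      rw [← pow_add]
      have e : i + 1 + (j + 1) = i + 2 + j := by omega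
      rw [e]
    rw [hc, hP, gauss H ((RatFunc.X : RatFunc ℚ) ^ (i + 2)), Finset.mul_sum, Finset.mul_sum]
    refine Finset.sum_congr rfl fun m _ => ?_
    have e : ((RatFunc.X : RatFunc ℚ) ^ (i + 2)) ^ m
        = ((RatFunc.X : RatFunc ℚ) ^ m) ^ i * ((RatFunc.X : RatFunc ℚ) ^ 2) ^ m := by
      rw [← pow_mul, ← pow_mul, ← pow_mul, ← pow_add]
      congr 1
      ring
    rw [e]
    ring
  rw [Finset.sum_congr rfl hterm, Finset.sum_comm]
  have hinner : ∀ m ∈ range (H + 1),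
      (∑ i ∈ range (K + 1),
        (qFac (RatFunc.X : RatFunc ℚ) H * ((-1 : RatFunc ℚ) ^ m
            * (RatFunc.X : RatFunc ℚ) ^ (m.choose 2) * ((RatFunc.X : RatFunc ℚ) ^ 2) ^ m
          / (qFac (RatFunc.X : RatFunc ℚ) m * qFac (RatFunc.X : RatFunc ℚ) (H - m))))
        * ((-1 : RatFunc ℚ) ^ (K - i) * (RatFunc.X : RatFunc ℚ) ^ ((K - i).choose 2)
            * ((RatFunc.X : RatFunc ℚ) ^ m) ^ i
          / (qFac (RatFunc.X : RatFunc ℚ) (K - i) * qFac (RatFunc.X : RatFunc ℚ) i)))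
      = (qFac (RatFunc.X : RatFunc ℚ) H * ((-1 : RatFunc ℚ) ^ m
            * (RatFunc.X : RatFunc ℚ) ^ (m.choose 2) * ((RatFunc.X : RatFunc ℚ) ^ 2) ^ m
          / (qFac (RatFunc.X : RatFunc ℚ) m * qFac (RatFunc.X : RatFunc ℚ) (H - m))))
        * ((∏ r ∈ range K, ((RatFunc.X : RatFunc ℚ) ^ m - (RatFunc.X : RatFunc ℚ) ^ r))
          / qFac (RatFunc.X : RatFunc ℚ) K) := by
    intro m _
    rw [← Finset.mul_sum,
      gauss_reflect K ((RatFunc.X : RatFunc ℚ) ^ m) (pow_ne_zero m RatFunc.X_ne_zero)]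
  rw [Finset.sum_congr rfl hinner]
  by_cases hKH : K ≤ H
  · obtain ⟨L, rfl⟩ : ∃ L, H = K + L := ⟨H - K, by omega⟩
    rw [qBinom, if_pos (by omega : K ≤ K + L), show K + L - K = L from by omega]
    rw [show K + L + 1 = K + (L + 1) from Nat.add_assoc K L 1]
    rw [Finset.sum_range_add]
    have hz : ∀ m ∈ range K,
        (qFac (RatFunc.X : RatFunc ℚ) (K + L) * ((-1 : RatFunc ℚ) ^ m
            * (RatFunc.X : RatFunc ℚ) ^ (m.choose 2) * ((RatFunc.X : RatFunc ℚ) ^ 2) ^ m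
          / (qFac (RatFunc.X : RatFunc ℚ) m * qFac (RatFunc.X : RatFunc ℚ) (K + L - m))))
        * ((∏ r ∈ range K, ((RatFunc.X : RatFunc ℚ) ^ m - (RatFunc.X : RatFunc ℚ) ^ r))
          / qFac (RatFunc.X : RatFunc ℚ) K) = 0 := by
      intro m hm
      rw [Finset.prod_eq_zero hm (sub_self ((RatFunc.X : RatFunc ℚ) ^ m)), zero_div, mul_zero]
    rw [Finset.sum_eq_zero hz, zero_add]
    rw [Finset.sum_congr rfl (fun s _ => main_term K L s), ← Finset.mul_sum]
    have h6 : qPoch ((RatFunc.X : RatFunc ℚ) ^ (K + 2)) (RatFunc.X : RatFunc ℚ) L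
          / qFac (RatFunc.X : RatFunc ℚ) L
        = ∑ s ∈ range (L + 1), (-1 : RatFunc ℚ) ^ s * (RatFunc.X : RatFunc ℚ) ^ (s.choose 2)
            * ((RatFunc.X : RatFunc ℚ) ^ (K + 2)) ^ s
            / (qFac (RatFunc.X : RatFunc ℚ) s * qFac (RatFunc.X : RatFunc ℚ) (L - s)) := by
      rw [gauss L ((RatFunc.X : RatFunc ℚ) ^ (K + 2)),
        mul_div_cancel_left₀ _ (qFac_ne_zero L)]
    rw [← h6]
    have hP : qPoch ((RatFunc.X : RatFunc ℚ) ^ (K + 2)) (RatFunc.X : RatFunc ℚ) L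
        = qFac (RatFunc.X : RatFunc ℚ) (K + (L + 1)) / qFac (RatFunc.X : RatFunc ℚ) (K + 1) := by
      have h5 : qPoch ((RatFunc.X : RatFunc ℚ) ^ (K + 2)) (RatFunc.X : RatFunc ℚ) L
          = ∏ r ∈ range L, (1 - (RatFunc.X : RatFunc ℚ) ^ (K + 1 + 1 + r)) := by
        rw [qPoch]
        refine Finset.prod_congr rfl fun r _ => ?_
        rw [← pow_add]
      rw [h5, show K + (L + 1) = K + 1 + L from by omega, qFac_add (K + 1) L,
        mul_div_cancel_left₀ _ (qFac_ne_zero (K + 1))]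
    rw [hP, show (K + 1) * K = K * (K + 1) from Nat.mul_comm _ _]
    ring
  · rw [qBinom, if_neg hKH]
    have hz : ∀ m ∈ range (H + 1),
        (qFac (RatFunc.X : RatFunc ℚ) H * ((-1 : RatFunc ℚ) ^ m
            * (RatFunc.X : RatFunc ℚ) ^ (m.choose 2) * ((RatFunc.X : RatFunc ℚ) ^ 2) ^ m
          / (qFac (RatFunc.X : RatFunc ℚ) m * qFac (RatFunc.X : RatFunc ℚ) (H - m))))
        * ((∏ r ∈ range K, ((RatFunc.X : RatFunc ℚ) ^ m - (RatFunc.X : RatFunc ℚ) ^ r))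
          / qFac (RatFunc.X : RatFunc ℚ) K) = 0 := by
      intro m hm
      have hmK : m ∈ range K := Finset.mem_range.mpr (by
        have := Finset.mem_range.mp hm; omega)
      rw [Finset.prod_eq_zero hmK (sub_self ((RatFunc.X : RatFunc ℚ) ^ m)), zero_div, mul_zero]
    rw [Finset.sum_eq_zero hz]
    ring
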